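/- Let Ḡ = (G, ω) be a vertex-weighted graph with genus g(Ḡ) ≥ 2 having a bridge e, and let Ḡ1, Ḡ2 be the two vertex-weighted graphs obtained from the connected components of G ∖ {e} with restricted weights. If Ḡ is hyperelliptic, then each Ḡ_i is either hyperelliptic or has genus at most 1. -/

import Mathlib

open scoped Classical

namespace BN

/-- A finite multigraph: `E u v` is the number of edges (other than loops)
between distinct vertices `u` and `v`, and `loops v` is the number of loops at `v`. -/
structure MultiGraph (V : Type) where
  E : V → V → ℕ
  loops : V → ℕ
  symm : ∀ u v, E u v = E v u
  noDiag : ∀ v, E v v = 0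

variable {V V1 V2 : Type}

/-- The divisor `[v]`. -/
def one [DecidableEq V] (v : V) : V → ℤ := fun w => if w = v then 1 else 0

/-- Degree of a divisor. -/
def deg [Fintype V] (d : V → ℤ) : ℤ := ∑ v, d v

/-- Effective divisor. -/
def Effective (d : V → ℤ) : Prop := ∀ v, 0 ≤ d v

namespace MultiGraph

/-- Divisor of a rational function (loops contribute nothing). -/
def div [Fintype V] (G : MultiGraph V) (f : V → ℤ) : V → ℤ :=
  fun v => ∑ w, (G.E v w : ℤ) * (f w - f v)

def Principal [Fintype V] (G : MultiGraph V) (d : V → ℤ) : Prop :=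
  ∃ f : V → ℤ, d = G.div f

def LinEquiv [Fintype V] (G : MultiGraph V) (d d' : V → ℤ) : Prop :=
  G.Principal (d' - d)

/-- `d` is linearly equivalent to an effective divisor. -/
def Winnable [Fintype V] (G : MultiGraph V) (d : V → ℤ) : Prop :=
  ∃ e : V → ℤ, Effective e ∧ G.LinEquiv d e

/-- The Baker–Norine rank of a divisor. -/
noncomputable def rank [Fintype V] (G : MultiGraph V) (d : V → ℤ) : ℤ :=
  if G.Winnable d then
    (sSup {s : ℕ | ∀ e : V → ℤ, Effective e → deg e = (s : ℤ) → G.Winnable (d - e)} : ℕ)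
  else -1

def Connected (G : MultiGraph V) : Prop :=
  ∀ u v : V, Relation.ReflTransGen (fun a b => 0 < G.E a b) u v

def Loopless (G : MultiGraph V) : Prop := ∀ v, G.loops v = 0

/-- Number of edges from `v` to vertices outside `A`. -/
def outdeg [Fintype V] [DecidableEq V] (G : MultiGraph V) (A : Finset V) (v : V) : ℕ :=
  ∑ w ∈ Finset.univ.filter (fun w => w ∉ A), G.E v w

/-- `v0`-reduced divisor. -/
def Reduced [Fintype V] [DecidableEq V] (G : MultiGraph V) (v0 : V) (d : V → ℤ) : Prop :=
  (∀ v, v ≠ v0 → 0 ≤ d v) ∧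
  ∀ A : Finset V, A.Nonempty → v0 ∉ A → ∃ v ∈ A, d v < (G.outdeg A v : ℤ)

def valence [Fintype V] (G : MultiGraph V) (v : V) : ℕ :=
  (∑ w, G.E v w) + 2 * G.loops v

/-- Canonical divisor. -/
def K [Fintype V] (G : MultiGraph V) : V → ℤ := fun v => (G.valence v : ℤ) - 2

def edgeCount [Fintype V] (G : MultiGraph V) : ℕ :=
  (∑ v, ∑ w, G.E v w) / 2 + ∑ v, G.loops v

end MultiGraph

open MultiGraph

/-- The graph obtained by joining `G1` and `G2` by a single bridge from `v1` to `v2`. -/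
def bridgeJoin [DecidableEq V1] [DecidableEq V2]
    (G1 : MultiGraph V1) (G2 : MultiGraph V2) (v1 : V1) (v2 : V2) :
    MultiGraph (V1 ⊕ V2) where
  E x y :=
    match x, y with
    | .inl a, .inl b => G1.E a b
    | .inr a, .inr b => G2.E a b
    | .inl a, .inr b => if a = v1 ∧ b = v2 then 1 else 0
    | .inr b, .inl a => if a = v1 ∧ b = v2 then 1 else 0
  loops := Sum.elim G1.loops G2.loops
  symm := by rintro (a | a) (b | b) <;> simp [G1.symm, G2.symm]
  noDiag := by rintro (a | a) <;> simp [G1.noDiag, G2.noDiag]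

/-- The virtual loopless graph `Ḡ•` of a vertex-weighted graph `(G, ω)`:
insert a vertex into each loop of `G` and add `ω v` subdivided loops at each `v`.
The inserted vertices are the pairs `⟨v, i⟩` with `i : Fin (G.loops v + ω v)`,
each joined to `v` by two parallel edges. -/
noncomputable def bullet (G : MultiGraph V) (ω : V → ℕ) :
    MultiGraph (V ⊕ (Σ v : V, Fin (G.loops v + ω v))) where
  E x y :=
    match x, y with
    | .inl u, .inl v => G.E u v
    | .inl u, .inr w => if u = w.1 then 2 else 0
    | .inr w, .inl u => if u = w.1 then 2 else 0
    | .inr _, .inr _ => 0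
  loops := fun _ => 0
  symm := by rintro (u | u) (v | v) <;> simp [G.symm]
  noDiag := by rintro (v | v) <;> simp [G.noDiag]

/-- The rank `r_Ḡ(d)` of a divisor on a vertex-weighted graph `(G, ω)`:
the Baker–Norine rank of `d` on `Ḡ•`. -/
noncomputable def wrank [Fintype V] [DecidableEq V] (G : MultiGraph V) (ω : V → ℕ)
    (d : V → ℤ) : ℤ :=
  (bullet G ω).rank (Sum.elim d 0)

/-- `v` is a base-point of the complete linear system `|d|•` on `Ḡ•`. -/
def wBasePoint [Fintype V] [DecidableEq V] (G : MultiGraph V) (ω : V → ℕ)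
    (d : V → ℤ) (v : V) : Prop :=
  wrank G ω (d - one v) = wrank G ω d

/-- Genus of a vertex-weighted graph. -/
def genus [Fintype V] (G : MultiGraph V) (ω : V → ℕ) : ℤ :=
  (G.edgeCount : ℤ) - Fintype.card V + 1 + ∑ v, (ω v : ℤ)

/-- A vertex-weighted graph of genus `≥ 2` is hyperelliptic if `Ḡ•` carries a
divisor of degree `2` and rank `1`. -/
def Hyperelliptic [Fintype V] [DecidableEq V] (G : MultiGraph V) (ω : V → ℕ) : Prop :=
  2 ≤ genus G ω ∧ ∃ d, deg d = 2 ∧ (bullet G ω).rank d = 1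

/-- The canonical divisor `K_Ḡ` of a vertex-weighted graph, viewed as a divisor on `G`. -/
noncomputable def wK [Fintype V] (G : MultiGraph V) (ω : V → ℕ) : V → ℤ :=
  fun v => (bullet G ω).K (Sum.inl v)

section Basic

variable [Fintype V] (G : MultiGraph V)

lemma deg_div (f : V → ℤ) : deg (G.div f) = 0 := by
  unfold deg MultiGraph.div
  have h : ∑ v, ∑ w, (G.E v w : ℤ) * (f w - f v)
      = ∑ w, ∑ v, (G.E v w : ℤ) * (f w - f v) := Finset.sum_comm
  have h2 : ∑ w, ∑ v, (G.E v w : ℤ) * (f w - f v)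
      = ∑ v, ∑ w, -((G.E v w : ℤ) * (f w - f v)) := by
    apply Finset.sum_congr rfl; intro w _
    apply Finset.sum_congr rfl; intro v _
    rw [G.symm]; ring
  simp only [Finset.sum_neg_distrib] at h2
  linarith [h.trans h2]

lemma principal_zero : G.Principal 0 := ⟨0, by funext v; simp [MultiGraph.div]⟩

lemma div_sub (f g : V → ℤ) : G.div f - G.div g = G.div (f - g) := by
  funext v
  simp only [Pi.sub_apply, MultiGraph.div, ← Finset.sum_sub_distrib]
  congr 1; funext w; ring

lemma principal_sub {a b : V → ℤ} (ha : G.Principal a) (hb : G.Principal b) :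
    G.Principal (a - b) := by
  obtain ⟨f, hf⟩ := ha; obtain ⟨g, hg⟩ := hb
  exact ⟨f - g, by rw [hf, hg, div_sub]⟩

lemma effective_deg_zero {e : V → ℤ} (he : Effective e) (h0 : deg e = 0) : e = 0 := by
  funext v
  have := (Finset.sum_eq_zero_iff_of_nonneg (fun w _ => he w)).1 h0 v (Finset.mem_univ v)
  simpa using this

lemma winnable_deg_nonneg {d : V → ℤ} (h : G.Winnable d) : 0 ≤ deg d := by
  obtain ⟨e, he, f, hf⟩ := h
  have hdeg : deg (e - d) = 0 := by rw [hf]; exact deg_div G f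
  have : deg e - deg d = 0 := by
    rw [← hdeg]; unfold deg; rw [← Finset.sum_sub_distrib]; rfl
  have hde : deg d = deg e := by linarith
  rw [hde]
  exact Finset.sum_nonneg fun v _ => he v

lemma winnable_add_effective {d h : V → ℤ} (hd : G.Winnable d) (hh : Effective h) :
    G.Winnable (d + h) := by
  obtain ⟨e, he, f, hf⟩ := hd
  exact ⟨e + h, fun v => add_nonneg (he v) (hh v), f, by
    rw [← hf]; funext v; simp only [Pi.add_apply, Pi.sub_apply]; ring⟩

end Basic
section Push

variable {A B C : Type}

/-- Pushforward of a divisor along a map. -/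
noncomputable def push [Fintype A] (π : A → B) (d : A → ℤ) : B → ℤ :=
  fun w => ∑ x, if π x = w then d x else 0

lemma push_deg [Fintype A] [Fintype B] (π : A → B) (d : A → ℤ) :
    deg (push π d) = deg d := by
  unfold deg push
  rw [Finset.sum_comm]
  apply Finset.sum_congr rfl; intro x _
  simp

lemma push_effective [Fintype A] (π : A → B) {d : A → ℤ} (h : Effective d) :
    Effective (push π d) := by
  intro w
  apply Finset.sum_nonneg
  intro x _
  split <;> simp [h x]

lemma push_sub [Fintype A] (π : A → B) (d d' : A → ℤ) :
    push π (d - d') = push π d - push π d' := by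
  funext w
  simp only [push, Pi.sub_apply, ← Finset.sum_sub_distrib]
  apply Finset.sum_congr rfl; intro x _
  split <;> simp

lemma push_comp [Fintype A] [Fintype B] (π1 : A → B) (π2 : B → C) (d : A → ℤ) :
    push π2 (push π1 d) = push (π2 ∘ π1) d := by
  funext w
  simp only [push, Function.comp]
  have step1 : (∑ y : B, if π2 y = w then ∑ x : A, if π1 x = y then d x else 0 else 0)
      = ∑ y : B, ∑ x : A, if π1 x = y then (if π2 y = w then d x else 0) else 0 := by
    apply Finset.sum_congr rfl; intro y _
    by_cases h : π2 y = w <;> simp [h]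
  rw [step1, Finset.sum_comm]
  apply Finset.sum_congr rfl; intro x _
  rw [Finset.sum_ite_eq Finset.univ (π1 x) (fun y => if π2 y = w then d x else 0)]
  simp

lemma push_id [Fintype A] (d : A → ℤ) : push id d = d := by
  funext w
  simp [push]

end Push
section Retract

variable {VB VB1 : Type} [Fintype VB] [Fintype VB1]

lemma sum_antisym (F : VB → VB → ℤ) (h : ∀ x y, F x y = - F y x) :
    ∑ x, ∑ y, F x y = 0 := by
  have h1 : ∑ x, ∑ y, F x y = ∑ y, ∑ x, F x y := Finset.sum_comm
  have h2 : (∑ y : VB, ∑ x : VB, F x y) = ∑ x, ∑ y, - F x y := by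
    apply Finset.sum_congr rfl; intro y _
    apply Finset.sum_congr rfl; intro x _
    exact h x y
  simp only [Finset.sum_neg_distrib] at h2
  linarith [h1.trans h2]

variable (B : MultiGraph VB) (B1 : MultiGraph VB1) (ι : VB1 → VB) (ρ : VB → VB1)

lemma div_push
    (C1 : ∀ x, ρ (ι x) = x)
    (C2 : ∀ x y, B.E x y ≠ 0 → ρ x ≠ ρ y → (∃ x', x = ι x') ∧ (∃ y', y = ι y'))
    (C3 : ∀ x' y', B.E (ι x') (ι y') = B1.E x' y')
    (f : VB → ℤ) : push ρ (B.div f) = B1.div (f ∘ ι) := by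
  funext w
  unfold push MultiGraph.div
  have step0 : (∑ x, if ρ x = w then ∑ y, (B.E x y : ℤ) * (f y - f x) else 0)
      = ∑ x, ∑ y, if ρ x = w then (B.E x y : ℤ) * (f y - f x) else 0 := by
    apply Finset.sum_congr rfl; intro x _
    by_cases h : ρ x = w <;> simp [h]
  rw [step0]
  have step1 : ∀ x y : VB, (if ρ x = w then (B.E x y : ℤ) * (f y - f x) else 0)
      = (if ρ x = w ∧ ρ y = w then (B.E x y : ℤ) * (f y - f x) else 0)
        + (if ρ x = w ∧ ρ y ≠ w then (B.E x y : ℤ) * (f y - f x) else 0) := by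
    intro x y
    by_cases h1 : ρ x = w <;> by_cases h2 : ρ y = w <;> simp [h1, h2]
  simp only [step1, Finset.sum_add_distrib]
  have zero1 : (∑ x, ∑ y, if ρ x = w ∧ ρ y = w then (B.E x y : ℤ) * (f y - f x) else 0) = 0 := by
    apply sum_antisym
    intro x y
    by_cases h1 : ρ x = w <;> by_cases h2 : ρ y = w <;>
      simp [h1, h2, and_comm, B.symm x y] <;> ring
  rw [zero1, zero_add]
  have step2 : ∀ x y : VB, (if ρ x = w ∧ ρ y ≠ w then (B.E x y : ℤ) * (f y - f x) else 0)
      = if x = ι w ∧ (ρ y ≠ w ∧ y = ι (ρ y)) then (B.E x y : ℤ) * (f y - f x) else 0 := by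
    intro x y
    by_cases hE : B.E x y = 0
    · simp [hE]
    · have hiff : (ρ x = w ∧ ρ y ≠ w) ↔ (x = ι w ∧ (ρ y ≠ w ∧ y = ι (ρ y))) := by
        constructor
        · rintro ⟨h1, h2⟩
          have hne : ρ x ≠ ρ y := by rw [h1]; exact fun h => h2 h.symm
          obtain ⟨⟨x', hx'⟩, ⟨y', hy'⟩⟩ := C2 x y hE hne
          refine ⟨?_, h2, ?_⟩
          · rw [hx', ← h1, hx', C1]
          · rw [hy', C1]
        · rintro ⟨h1, h2, h3⟩
          exact ⟨by rw [h1, C1], h2⟩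
      rw [if_congr hiff rfl rfl]
  simp only [step2]
  rw [Finset.sum_comm]
  have step3 : ∀ y : VB, (∑ x, if x = ι w ∧ (ρ y ≠ w ∧ y = ι (ρ y)) then (B.E x y : ℤ) * (f y - f x) else 0)
      = if ρ y ≠ w ∧ y = ι (ρ y) then (B.E (ι w) y : ℤ) * (f y - f (ι w)) else 0 := by
    intro y
    by_cases hQ : ρ y ≠ w ∧ y = ι (ρ y)
    · have hc : ∀ x : VB, (if x = ι w ∧ (ρ y ≠ w ∧ y = ι (ρ y)) then (B.E x y : ℤ) * (f y - f x) else 0)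
          = if x = ι w then (B.E x y : ℤ) * (f y - f x) else 0 := fun x =>
        if_congr (and_iff_left hQ) rfl rfl
      rw [Finset.sum_congr rfl (fun x _ => hc x)]
      rw [Finset.sum_ite_eq' Finset.univ (ι w) (fun x => (B.E x y : ℤ) * (f y - f x))]
      rw [if_pos (Finset.mem_univ _), if_pos hQ]
    · rw [if_neg hQ]
      apply Finset.sum_eq_zero
      intro x _
      rw [if_neg (fun hx => hQ hx.2)]
  simp only [step3]
  rw [← Finset.sum_filter]
  have step4 : (Finset.univ.filter (fun y : VB => ρ y ≠ w ∧ y = ι (ρ y)))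
      = (Finset.univ.filter (fun y' : VB1 => y' ≠ w)).image ι := by
    ext y
    simp only [Finset.mem_filter, Finset.mem_univ, true_and, Finset.mem_image]
    constructor
    · rintro ⟨h1, h2⟩; exact ⟨ρ y, h1, h2.symm⟩
    · rintro ⟨y', hy', rfl⟩; rw [C1]; exact ⟨hy', rfl⟩
  rw [step4]
  rw [Finset.sum_image (by intro a _ b _ hab; have := congrArg ρ hab; rwa [C1, C1] at this)]
  have step5 : ∀ y' : VB1, (B1.E w y' : ℤ) * ((f ∘ ι) y' - (f ∘ ι) w)
      = if y' ≠ w then (B.E (ι w) (ι y') : ℤ) * (f (ι y') - f (ι w)) else 0 := by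
    intro y'
    by_cases h : y' = w
    · subst h; simp [B1.noDiag]
    · simp [h, C3]
  rw [Finset.sum_filter]
  apply Finset.sum_congr rfl
  intro y' _
  rw [step5 y']

lemma winnable_push
    (C1 : ∀ x, ρ (ι x) = x)
    (C2 : ∀ x y, B.E x y ≠ 0 → ρ x ≠ ρ y → (∃ x', x = ι x') ∧ (∃ y', y = ι y'))
    (C3 : ∀ x' y', B.E (ι x') (ι y') = B1.E x' y')
    {x : VB → ℤ} (hx : B.Winnable x) : B1.Winnable (push ρ x) := by
  obtain ⟨e, he, f, hf⟩ := hx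
  refine ⟨push ρ e, push_effective ρ he, f ∘ ι, ?_⟩
  rw [← push_sub, hf, div_push B B1 ι ρ C1 C2 C3]

end Retract
section Cuts

variable [Fintype V] [DecidableEq V] (G : MultiGraph V)

lemma cut_sum (f : V → ℤ) (A : Finset V) :
    ∑ a ∈ A, G.div f a = ∑ a ∈ A, ∑ b ∈ Aᶜ, (G.E a b : ℤ) * (f b - f a) := by
  unfold MultiGraph.div
  have hsplit : ∀ a : V, (∑ b, (G.E a b : ℤ) * (f b - f a))
      = (∑ b ∈ A, (G.E a b : ℤ) * (f b - f a)) + ∑ b ∈ Aᶜ, (G.E a b : ℤ) * (f b - f a) :=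
    fun a => (Finset.sum_add_sum_compl A _).symm
  simp only [hsplit, Finset.sum_add_distrib]
  have hzero : (∑ a ∈ A, ∑ b ∈ A, (G.E a b : ℤ) * (f b - f a)) = 0 := by
    have h1 : (∑ a ∈ A, ∑ b ∈ A, (G.E a b : ℤ) * (f b - f a))
        = ∑ b ∈ A, ∑ a ∈ A, (G.E a b : ℤ) * (f b - f a) := Finset.sum_comm
    have h2 : (∑ b ∈ A, ∑ a ∈ A, (G.E a b : ℤ) * (f b - f a))
        = ∑ a ∈ A, ∑ b ∈ A, -((G.E a b : ℤ) * (f b - f a)) := by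
      apply Finset.sum_congr rfl; intro b _
      apply Finset.sum_congr rfl; intro a _
      rw [G.symm]; ring
    simp only [Finset.sum_neg_distrib] at h2
    linarith [h1.trans h2]
  rw [hzero, zero_add]

lemma crossing_exists (hconn : G.Connected) {A : Finset V} {a u : V}
    (ha : a ∈ A) (hu : u ∉ A) : ∃ x ∈ A, ∃ y ∈ Aᶜ, 0 < G.E x y := by
  suffices hgen : ∀ c, Relation.ReflTransGen (fun a b => 0 < G.E a b) a c → c ∉ A →
      ∃ x ∈ A, ∃ y ∈ Aᶜ, 0 < G.E x y by
    exact hgen u (hconn a u) hu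
  intro c hrtg
  induction hrtg with
  | refl => intro hc; exact absurd ha hc
  | tail hab hbc ih =>
    rename_i b c'
    intro hc'
    by_cases hb : b ∈ A
    · exact ⟨b, hb, c', Finset.mem_compl.2 hc', hbc⟩
    · exact ih hb

lemma principal_cut (hconn : G.Connected) {u w : V} (hne : u ≠ w)
    (h : G.Principal (one u - one w)) :
    ∃ A : Finset V, w ∈ A ∧ u ∉ A ∧ (∑ a ∈ A, ∑ b ∈ Aᶜ, G.E a b) = 1 := by
  obtain ⟨f, hf⟩ := h
  set A : Finset V := Finset.univ.filter (fun x => f u < f x) with hA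
  have hu : u ∉ A := by simp [hA]
  have hAne : A.Nonempty := by
    by_contra hAe
    rw [Finset.not_nonempty_iff_eq_empty] at hAe
    have hle : ∀ x : V, f x ≤ f u := by
      intro x
      by_contra hx
      have : x ∈ A := by simp [hA]; omega
      simp [hAe] at this
    have hdivu : G.div f u = 1 := by
      rw [← hf]; simp [one, Pi.sub_apply, hne, (Ne.symm hne)]
    have : G.div f u ≤ 0 := by
      apply Finset.sum_nonpos
      intro x _
      have h1 : (0:ℤ) ≤ G.E u x := Int.natCast_nonneg _
      have h2 : f x - f u ≤ 0 := by linarith [hle x]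
      exact mul_nonpos_of_nonneg_of_nonpos h1 h2
    omega
  obtain ⟨a0, ha0⟩ := hAne
  obtain ⟨x0, hx0, y0, hy0, hxy0⟩ := crossing_exists G hconn ha0 hu
  -- key sum computation
  have hLHS : ∑ a ∈ A, G.div f a = (if u ∈ A then 1 else 0) - (if w ∈ A then 1 else 0) := by
    rw [← hf]
    simp only [Pi.sub_apply]
    rw [Finset.sum_sub_distrib]
    unfold one
    rw [Finset.sum_ite_eq' A u (fun _ => (1:ℤ)), Finset.sum_ite_eq' A w (fun _ => (1:ℤ))]
  rw [cut_sum] at hLHS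
  have hbound : ∑ a ∈ A, ∑ b ∈ Aᶜ, (G.E a b : ℤ) * (f b - f a)
      ≤ -(∑ a ∈ A, ∑ b ∈ Aᶜ, (G.E a b : ℤ)) := by
    rw [← Finset.sum_neg_distrib]
    apply Finset.sum_le_sum
    intro a haA
    rw [← Finset.sum_neg_distrib]
    apply Finset.sum_le_sum
    intro b hbA
    have hfa : f u < f a := by simpa [hA] using haA
    have hfb : f b ≤ f u := by
      have := Finset.mem_compl.1 hbA
      simp [hA] at this
      omega
    have h2 : f b - f a ≤ -1 := by omega
    have := mul_le_mul_of_nonneg_left h2 (Int.natCast_nonneg (G.E a b))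
    linarith
  have hlow : (1:ℤ) ≤ ∑ a ∈ A, ∑ b ∈ Aᶜ, (G.E a b : ℤ) := by
    have h1 : (G.E x0 y0 : ℤ) ≤ ∑ b ∈ Aᶜ, (G.E x0 b : ℤ) :=
      Finset.single_le_sum (fun b _ => Int.natCast_nonneg _) hy0
    have h2 : (∑ b ∈ Aᶜ, (G.E x0 b : ℤ)) ≤ ∑ a ∈ A, ∑ b ∈ Aᶜ, (G.E a b : ℤ) :=
      Finset.single_le_sum (fun a _ => Finset.sum_nonneg (fun b _ => Int.natCast_nonneg _)) hx0
    have h3 : (1:ℤ) ≤ (G.E x0 y0 : ℤ) := by exact_mod_cast hxy0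
    linarith
  rw [if_neg hu] at hLHS
  have hwA : w ∈ A := by
    by_contra hw
    rw [if_neg hw] at hLHS
    linarith
  rw [if_pos hwA] at hLHS
  have hone : (∑ a ∈ A, ∑ b ∈ Aᶜ, (G.E a b : ℤ)) = 1 := by linarith
  refine ⟨A, hwA, hu, ?_⟩
  have : ((∑ a ∈ A, ∑ b ∈ Aᶜ, G.E a b : ℕ) : ℤ) = 1 := by push_cast; exact hone
  exact_mod_cast this

end Cuts
section TreeBound

variable [Fintype V] [DecidableEq V] (G : MultiGraph V)

lemma cross_unique {A : Finset V} {u w : V} (hu : u ∈ A) (hw : w ∈ Aᶜ) (hE : 0 < G.E u w)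
    (hsum : (∑ a ∈ A, ∑ b ∈ Aᶜ, G.E a b) = 1) :
    G.E u w = 1 ∧ ∀ x ∈ A, ∀ y ∈ Aᶜ, ¬(x = u ∧ y = w) → G.E x y = 0 := by
  rw [← Finset.sum_product'] at hsum
  have hmem : (u, w) ∈ A ×ˢ Aᶜ := Finset.mem_product.2 ⟨hu, hw⟩
  rw [← Finset.add_sum_erase _ _ hmem] at hsum
  have hsum2 : G.E u w + (∑ p ∈ (A ×ˢ Aᶜ).erase (u, w), G.E p.1 p.2) = 1 := hsum
  have h1 : G.E u w = 1 := by omega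
  refine ⟨h1, ?_⟩
  intro x hx y hy hne
  have hrest : (∑ p ∈ (A ×ˢ Aᶜ).erase (u, w), G.E p.1 p.2) = 0 := by omega
  have hxy : (x, y) ∈ (A ×ˢ Aᶜ).erase (u, w) := by
    refine Finset.mem_erase.2 ⟨?_, Finset.mem_product.2 ⟨hx, hy⟩⟩
    intro h; apply hne; exact ⟨congrArg Prod.fst h, congrArg Prod.snd h⟩
  exact (Finset.sum_eq_zero_iff.1 hrest) (x, y) hxy

lemma splice {S A : Finset V} {u w : V}
    (hcross : ∀ x y, 0 < G.E x y → x ∈ A → y ∉ A → x = u ∧ y = w)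
    {a : V} (ha : a ∈ A) :
    ∀ b, Relation.ReflTransGen (fun x y => 0 < G.E x y ∧ x ∈ S ∧ y ∈ S) a b →
      (b ∈ A → Relation.ReflTransGen
        (fun x y => 0 < G.E x y ∧ (x ∈ S ∧ x ∈ A) ∧ (y ∈ S ∧ y ∈ A)) a b)
      ∧ (b ∉ A → Relation.ReflTransGen
        (fun x y => 0 < G.E x y ∧ (x ∈ S ∧ x ∈ A) ∧ (y ∈ S ∧ y ∈ A)) a u) := by
  intro b hrtg
  induction hrtg with
  | refl => exact ⟨fun _ => Relation.ReflTransGen.refl, fun hb => absurd ha hb⟩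
  | tail hab hbc ih =>
    rename_i b c
    obtain ⟨hE, hbS, hcS⟩ := hbc
    constructor
    · intro hcA
      by_cases hbA : b ∈ A
      · exact (ih.1 hbA).tail ⟨hE, ⟨hbS, hbA⟩, ⟨hcS, hcA⟩⟩
      · have hEr : 0 < G.E c b := by rw [G.symm]; exact hE
        obtain ⟨hcu, hbw⟩ := hcross c b hEr hcA hbA
        rw [hcu]
        exact ih.2 hbA
    · intro hcA
      by_cases hbA : b ∈ A
      · obtain ⟨hbu, hcw⟩ := hcross b c hE hbA hcA
        rw [← hbu]
        exact ih.1 hbA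
      · exact ih.2 hbA

lemma tree_bound
    (hcut : ∀ u w, 0 < G.E u w →
      ∃ A : Finset V, u ∈ A ∧ w ∉ A ∧ (∑ a ∈ A, ∑ b ∈ Aᶜ, G.E a b) = 1) :
    ∀ n : ℕ, ∀ S : Finset V, S.card ≤ n → S.Nonempty →
      (∀ a ∈ S, ∀ b ∈ S,
        Relation.ReflTransGen (fun x y => 0 < G.E x y ∧ x ∈ S ∧ y ∈ S) a b) →
      (∑ a ∈ S, ∑ b ∈ S, G.E a b) + 2 ≤ 2 * S.card := by
  intro n
  induction n with
  | zero =>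
    intro S hcard hne _
    have := Finset.card_pos.2 hne
    omega
  | succ n ih =>
    intro S hcard hne hconnS
    by_cases hedge : ∃ u ∈ S, ∃ w ∈ S, 0 < G.E u w
    · obtain ⟨u, huS, w, hwS, hE⟩ := hedge
      obtain ⟨A, huA, hwA, hsum⟩ := hcut u w hE
      obtain ⟨hE1, hzero⟩ := cross_unique G huA (Finset.mem_compl.2 hwA) hE hsum
      have hcross : ∀ x y, 0 < G.E x y → x ∈ A → y ∉ A → x = u ∧ y = w := by
        intro x y h hx hy
        by_contra hne'
        have := hzero x hx y (Finset.mem_compl.2 hy) hne'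
        omega
      have hcross' : ∀ x y, 0 < G.E x y → x ∈ Aᶜ → y ∉ Aᶜ → x = w ∧ y = u := by
        intro x y h hx hy
        have hyA : y ∈ A := by simpa using hy
        have hxA : x ∉ A := by simpa using hx
        have hEr : 0 < G.E y x := by rw [G.symm]; exact h
        obtain ⟨h1, h2⟩ := hcross y x hEr hyA hxA
        exact ⟨h2, h1⟩
      set S1 : Finset V := S ∩ A with hS1
      set S2 : Finset V := S \ A with hS2
      have huS1 : u ∈ S1 := Finset.mem_inter.2 ⟨huS, huA⟩
      have hwS2 : w ∈ S2 := Finset.mem_sdiff.2 ⟨hwS, hwA⟩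
      have hcards : S1.card + S2.card = S.card := Finset.card_inter_add_card_sdiff S A
      have hS1sub : S1 ⊆ S := Finset.inter_subset_left
      have hS2sub : S2 ⊆ S := Finset.sdiff_subset
      have hc1 : S1.card ≤ n := by
        have : S1.card < S.card := Finset.card_lt_card ⟨hS1sub, fun hsub =>
          hwA (Finset.mem_inter.1 (hsub hwS)).2⟩
        omega
      have hc2 : S2.card ≤ n := by
        have : S2.card < S.card := Finset.card_lt_card ⟨hS2sub, fun hsub =>
          (Finset.mem_sdiff.1 (hsub huS)).2 huA⟩
        omega
      have hconn1 : ∀ a ∈ S1, ∀ b ∈ S1,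
          Relation.ReflTransGen (fun x y => 0 < G.E x y ∧ x ∈ S1 ∧ y ∈ S1) a b := by
        intro a haM b hbM
        have h := (splice G hcross (Finset.mem_inter.1 haM).2 b
          (hconnS a (hS1sub haM) b (hS1sub hbM))).1 (Finset.mem_inter.1 hbM).2
        refine Relation.ReflTransGen.mono ?_ _ _ h
        rintro x y ⟨h1, ⟨h2, h3⟩, ⟨h4, h5⟩⟩
        exact ⟨h1, Finset.mem_inter.2 ⟨h2, h3⟩, Finset.mem_inter.2 ⟨h4, h5⟩⟩
      have hconn2 : ∀ a ∈ S2, ∀ b ∈ S2,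
          Relation.ReflTransGen (fun x y => 0 < G.E x y ∧ x ∈ S2 ∧ y ∈ S2) a b := by
        intro a haM b hbM
        have haC : a ∈ Aᶜ := Finset.mem_compl.2 (Finset.mem_sdiff.1 haM).2
        have hbC : b ∈ Aᶜ := Finset.mem_compl.2 (Finset.mem_sdiff.1 hbM).2
        have h := (splice G hcross' haC b
          (hconnS a (hS2sub haM) b (hS2sub hbM))).1 hbC
        refine Relation.ReflTransGen.mono ?_ _ _ h
        rintro x y ⟨h1, ⟨h2, h3⟩, ⟨h4, h5⟩⟩
        exact ⟨h1, Finset.mem_sdiff.2 ⟨h2, by simpa using h3⟩,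
          Finset.mem_sdiff.2 ⟨h4, by simpa using h5⟩⟩
      have IH1 := ih S1 hc1 ⟨u, huS1⟩ hconn1
      have IH2 := ih S2 hc2 ⟨w, hwS2⟩ hconn2
      have hdisj : Disjoint S1 S2 := (Finset.disjoint_sdiff_inter S A).symm
      have hU : S = S1 ∪ S2 := by
        rw [hS1, hS2, Finset.union_comm, Finset.sdiff_union_inter]
      have hsplit : (∑ a ∈ S, ∑ b ∈ S, G.E a b)
          = (∑ a ∈ S1, ∑ b ∈ S1, G.E a b) + (∑ a ∈ S1, ∑ b ∈ S2, G.E a b)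
            + ((∑ a ∈ S2, ∑ b ∈ S1, G.E a b) + ∑ a ∈ S2, ∑ b ∈ S2, G.E a b) := by
        rw [hU, Finset.sum_union hdisj]
        congr 1
        · rw [← Finset.sum_add_distrib]
          apply Finset.sum_congr rfl; intro a _
          rw [Finset.sum_union hdisj]
        · rw [← Finset.sum_add_distrib]
          apply Finset.sum_congr rfl; intro a _
          rw [Finset.sum_union hdisj]
      have hcr12 : (∑ a ∈ S1, ∑ b ∈ S2, G.E a b) = 1 := by
        rw [← Finset.sum_product']
        rw [Finset.sum_eq_single_of_mem (u, w) (Finset.mem_product.2 ⟨huS1, hwS2⟩)]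
        · exact hE1
        · rintro ⟨x, y⟩ hmem hne'
          have hx := (Finset.mem_product.1 hmem).1
          have hy := (Finset.mem_product.1 hmem).2
          apply hzero x (Finset.mem_inter.1 hx).2 y
            (Finset.mem_compl.2 (Finset.mem_sdiff.1 hy).2)
          intro ⟨e1, e2⟩; apply hne'; rw [e1, e2]
      have hcr21 : (∑ a ∈ S2, ∑ b ∈ S1, G.E a b) = 1 := by
        rw [← Finset.sum_product']
        rw [Finset.sum_eq_single_of_mem (w, u) (Finset.mem_product.2 ⟨hwS2, huS1⟩)]
        · rw [G.symm]; exact hE1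
        · rintro ⟨x, y⟩ hmem hne'
          have hx := (Finset.mem_product.1 hmem).1
          have hy := (Finset.mem_product.1 hmem).2
          rw [G.symm]
          apply hzero y (Finset.mem_inter.1 hy).2 x
            (Finset.mem_compl.2 (Finset.mem_sdiff.1 hx).2)
          intro ⟨e1, e2⟩; apply hne'; rw [e1, e2]
      omega
    · push_neg at hedge
      have hz : (∑ a ∈ S, ∑ b ∈ S, G.E a b) = 0 := by
        apply Finset.sum_eq_zero; intro a haS
        apply Finset.sum_eq_zero; intro b hbS
        have := hedge a haS b hbS
        omega
      have := Finset.card_pos.2 hne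
      omega

end TreeBound
section Abstract

lemma deg_sub [Fintype V] (a b : V → ℤ) : deg (a - b) = deg a - deg b := by
  unfold deg; rw [← Finset.sum_sub_distrib]; rfl

lemma deg_one [Fintype V] [DecidableEq V] (u : V) : deg (one u) = 1 := by
  unfold deg one
  rw [Finset.sum_ite_eq' Finset.univ u (fun _ => (1:ℤ))]
  simp

lemma effective_one [DecidableEq V] (u : V) : Effective (one u) := by
  intro v; unfold one; split <;> norm_num

lemma memS_le [Fintype V] [Nonempty V] (G : MultiGraph V) {d : V → ℤ} {s : ℕ}
    (hmem : ∀ e : V → ℤ, Effective e → deg e = (s : ℤ) → G.Winnable (d - e)) :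
    (s : ℤ) ≤ deg d := by
  classical
  set u0 := Classical.arbitrary V
  set e : V → ℤ := fun x => if x = u0 then (s:ℤ) else 0 with he_def
  have he : Effective e := by
    intro v; rw [he_def]; dsimp only; split <;> [exact Int.natCast_nonneg s; rfl]
  have hdege : deg e = (s : ℤ) := by
    unfold deg; rw [he_def]
    rw [Finset.sum_ite_eq' Finset.univ u0 (fun _ => (s:ℤ))]
    simp
  have hw := hmem e he hdege
  have := winnable_deg_nonneg G hw
  rw [deg_sub, hdege] at this
  linarith

lemma abstract_side {VB VB1 : Type} [Fintype VB] [Fintype VB1] [DecidableEq VB1] [Nonempty VB1]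
    (B : MultiGraph VB) (B1 : MultiGraph VB1) (ι : VB1 → VB) (ρ : VB → VB1)
    (C1 : ∀ x, ρ (ι x) = x)
    (C2 : ∀ x y, B.E x y ≠ 0 → ρ x ≠ ρ y → (∃ x', x = ι x') ∧ (∃ y', y = ι y'))
    (C3 : ∀ x' y', B.E (ι x') (ι y') = B1.E x' y')
    (d : VB → ℤ) (hdeg : deg d = 2) (hrank : B.rank d = 1) :
    (∃ d1 : VB1 → ℤ, deg d1 = 2 ∧ B1.rank d1 = 1) ∨
      (∀ u w : VB1, B1.Principal (one u - one w)) := by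
  classical
  have hNB : Nonempty VB := ⟨ι (Classical.arbitrary VB1)⟩
  have hW : B.Winnable d := by
    by_contra h
    rw [MultiGraph.rank, if_neg h] at hrank
    norm_num at hrank
  have h0S : ∀ e : VB → ℤ, Effective e → deg e = ((0:ℕ) : ℤ) → B.Winnable (d - e) := by
    intro e he h0
    have : e = 0 := effective_deg_zero he (by exact_mod_cast h0)
    rw [this, sub_zero]
    exact hW
  have hbdd : ∀ s ∈ {s : ℕ | ∀ e : VB → ℤ, Effective e → deg e = (s : ℤ) → B.Winnable (d - e)},
      s ≤ 2 := by
    intro s hs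
    have := memS_le B hs
    rw [hdeg] at this
    exact_mod_cast this
  have hSup : sSup {s : ℕ | ∀ e : VB → ℤ, Effective e → deg e = (s : ℤ) → B.Winnable (d - e)}
      = 1 := by
    rw [MultiGraph.rank, if_pos hW] at hrank
    exact_mod_cast hrank
  have h1S : ∀ e : VB → ℤ, Effective e → deg e = ((1:ℕ) : ℤ) → B.Winnable (d - e) := by
    have hmem := Nat.sSup_mem (s := {s : ℕ | ∀ e : VB → ℤ, Effective e → deg e = (s : ℤ) →
      B.Winnable (d - e)}) ⟨0, h0S⟩ ⟨2, hbdd⟩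
    rw [hSup] at hmem
    exact hmem
  set d1 : VB1 → ℤ := push ρ d with hd1
  have hdeg1 : deg d1 = 2 := by rw [hd1, push_deg]; exact hdeg
  have hcompid : ρ ∘ ι = id := funext C1
  have hWpush : B1.Winnable d1 := winnable_push B B1 ι ρ C1 C2 C3 hW
  have h1S1 : ∀ e : VB1 → ℤ, Effective e → deg e = ((1:ℕ) : ℤ) → B1.Winnable (d1 - e) := by
    intro e he hdege
    have h := h1S (push ι e) (push_effective ι he) (by rw [push_deg]; exact hdege)
    have h2 := winnable_push B B1 ι ρ C1 C2 C3 h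
    rw [push_sub, push_comp, hcompid, push_id] at h2
    exact h2
  by_cases h2S1 : ∀ e : VB1 → ℤ, Effective e → deg e = 2 → B1.Winnable (d1 - e)
  · right
    have key : ∀ e : VB1 → ℤ, Effective e → deg e = 2 → B1.Principal (e - d1) := by
      intro e he hd2
      obtain ⟨g, hg, hP⟩ := h2S1 e he hd2
      have hdg : deg g = 0 := by
        obtain ⟨f, hf⟩ := hP
        have h0 : deg (g - (d1 - e)) = 0 := by rw [hf]; exact deg_div B1 f
        rw [deg_sub, deg_sub, hdeg1, hd2] at h0
        linarith
      have hg0 : g = 0 := effective_deg_zero hg hdg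
      obtain ⟨f, hf⟩ := hP
      rw [hg0] at hf
      refine ⟨f, ?_⟩
      rw [← hf]
      ring
    intro u w
    by_cases huw : u = w
    · rw [huw, sub_self]
      exact principal_zero B1
    · have heff2 : ∀ a b : VB1, Effective (one a + one b) :=
        fun a b v => add_nonneg (effective_one a v) (effective_one b v)
      have hdeg2 : ∀ a b : VB1, deg (one a + one b) = 2 := by
        intro a b
        have : deg (one a + one b) = deg (one a) + deg (one b) := by
          unfold deg; rw [← Finset.sum_add_distrib]; rfl
        rw [this, deg_one, deg_one]; norm_num
      have p1 := key (one u + one u) (heff2 u u) (hdeg2 u u)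
      have p2 := key (one u + one w) (heff2 u w) (hdeg2 u w)
      have := principal_sub B1 p1 p2
      have heq : (one u + one u - d1) - (one u + one w - d1) = one u - one w := by ring
      rwa [heq] at this
  · left
    refine ⟨d1, hdeg1, ?_⟩
    rw [MultiGraph.rank, if_pos hWpush]
    have h1mem : (1:ℕ) ∈ {s : ℕ | ∀ e : VB1 → ℤ, Effective e → deg e = (s : ℤ) →
        B1.Winnable (d1 - e)} := h1S1
    have hub : ∀ s ∈ {s : ℕ | ∀ e : VB1 → ℤ, Effective e → deg e = (s : ℤ) →
        B1.Winnable (d1 - e)}, s ≤ 1 := by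
      intro s hs
      have hle : (s:ℤ) ≤ 2 := by
        have := memS_le B1 hs
        rwa [hdeg1] at this
      have hs2 : s ≤ 2 := by exact_mod_cast hle
      rcases Nat.lt_or_ge s 2 with h | h
      · omega
      · exfalso
        have hs2' : s = 2 := by omega
        apply h2S1
        intro e he hdege
        exact hs e he (by rw [hdege, hs2']; norm_num)
    have : sSup {s : ℕ | ∀ e : VB1 → ℤ, Effective e → deg e = (s : ℤ) →
        B1.Winnable (d1 - e)} = 1 :=
      le_antisymm (csSup_le ⟨1, h1mem⟩ hub) (le_csSup ⟨1, fun s hs => hub s hs⟩ h1mem)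
    rw [this]
    norm_num

end Abstract
section Bullet

variable [Fintype V] [DecidableEq V]

lemma bullet_connected (G : MultiGraph V) (ω : V → ℕ) (hconn : G.Connected) :
    (bullet G ω).Connected := by
  have hbase : ∀ a b : V, Relation.ReflTransGen
      (fun x y => 0 < (bullet G ω).E x y) (Sum.inl a) (Sum.inl b) := by
    intro a b
    exact Relation.ReflTransGen.lift Sum.inl (fun x y h => h) _ _ (hconn a b)
  have hstep : ∀ s : (Σ v : V, Fin (G.loops v + ω v)), Relation.ReflTransGen
      (fun x y => 0 < (bullet G ω).E x y) (Sum.inr s) (Sum.inl s.1) := by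
    intro s
    apply Relation.ReflTransGen.single
    have h : (bullet G ω).E (Sum.inr s) (Sum.inl s.1) = 2 := by simp [bullet]
    rw [h]; norm_num
  have hstep' : ∀ s : (Σ v : V, Fin (G.loops v + ω v)), Relation.ReflTransGen
      (fun x y => 0 < (bullet G ω).E x y) (Sum.inl s.1) (Sum.inr s) := by
    intro s
    apply Relation.ReflTransGen.single
    have h : (bullet G ω).E (Sum.inl s.1) (Sum.inr s) = 2 := by simp [bullet]
    rw [h]; norm_num
  rintro (a | s) (b | t)
  · exact hbase a b
  · exact (hbase a t.1).trans (hstep' t)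
  · exact (hstep s).trans (hbase s.1 b)
  · exact ((hstep s).trans (hbase s.1 t.1)).trans (hstep' t)

lemma genus_le_of_all_principal [Nonempty V] (G : MultiGraph V) (ω : V → ℕ)
    (hconn : G.Connected)
    (hprin : ∀ u w : V ⊕ (Σ v : V, Fin (G.loops v + ω v)),
      (bullet G ω).Principal (one u - one w)) :
    genus G ω ≤ 0 := by
  classical
  set B1 := bullet G ω with hB1
  have hBconn : B1.Connected := bullet_connected G ω hconn
  have hcut : ∀ u w, 0 < B1.E u w →
      ∃ A, u ∈ A ∧ w ∉ A ∧ (∑ a ∈ A, ∑ b ∈ Aᶜ, B1.E a b) = 1 := by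
    intro u w hE
    have hne : w ≠ u := by
      intro h; rw [h] at hE; rw [B1.noDiag] at hE; omega
    exact principal_cut B1 hBconn hne (hprin w u)
  have hconnS : ∀ a ∈ (Finset.univ : Finset (V ⊕ (Σ v : V, Fin (G.loops v + ω v)))),
      ∀ b ∈ Finset.univ, Relation.ReflTransGen
        (fun x y => 0 < B1.E x y ∧ x ∈ Finset.univ ∧ y ∈ Finset.univ) a b := by
    intro a _ b _
    exact Relation.ReflTransGen.mono (fun x y h => ⟨h, Finset.mem_univ x, Finset.mem_univ y⟩)
      _ _ (hBconn a b)
  have hTB := tree_bound B1 hcut (Finset.univ.card) Finset.univ le_rfl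
    Finset.univ_nonempty hconnS
  -- now compute the sums
  have hinner2 : ∀ a : V, (∑ s : (Σ v : V, Fin (G.loops v + ω v)), if a = s.1 then 2 else 0)
      = 2 * (G.loops a + ω a) := by
    intro a
    rw [← Finset.univ_sigma_univ, Finset.sum_sigma]
    have : ∀ v : V, (∑ _i : Fin (G.loops v + ω v), if a = v then 2 else 0)
        = if a = v then 2 * (G.loops v + ω v) else 0 := by
      intro v
      rw [Finset.sum_const, Finset.card_univ, Fintype.card_fin]
      by_cases h : a = v <;> simp [h] <;> ring
    rw [Finset.sum_congr rfl (fun v _ => this v)]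
    rw [Finset.sum_ite_eq Finset.univ a (fun v => 2 * (G.loops v + ω v))]
    simp
  have hsum : (∑ a ∈ Finset.univ, ∑ b ∈ Finset.univ, B1.E a b)
      = (∑ a, ∑ b, G.E a b) + 2 * (∑ v, (G.loops v + ω v)) + 2 * (∑ v, (G.loops v + ω v)) := by
    rw [Fintype.sum_sum_type]
    have hA1 : ∀ a : V, (∑ b, B1.E (Sum.inl a) b)
        = (∑ b : V, G.E a b) + ∑ s : (Σ v : V, Fin (G.loops v + ω v)), (if a = s.1 then 2 else 0) := by
      intro a
      rw [Fintype.sum_sum_type]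
      have e1 : (∑ b : V, B1.E (Sum.inl a) (Sum.inl b)) = ∑ b : V, G.E a b := by
        apply Finset.sum_congr rfl; intro b _; simp [hB1, bullet]
      have e2 : (∑ s : (Σ v : V, Fin (G.loops v + ω v)), B1.E (Sum.inl a) (Sum.inr s))
          = ∑ s : (Σ v : V, Fin (G.loops v + ω v)), (if a = s.1 then 2 else 0) := by
        apply Finset.sum_congr rfl; intro s _; simp [hB1, bullet]
      rw [e1, e2]
    have hA2 : ∀ s : (Σ v : V, Fin (G.loops v + ω v)), (∑ b, B1.E (Sum.inr s) b) = 2 := by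
      intro s
      rw [Fintype.sum_sum_type]
      have h1 : (∑ b : V, B1.E (Sum.inr s) (Sum.inl b)) = 2 := by
        have heq : ∀ b : V, B1.E (Sum.inr s) (Sum.inl b) = if b = s.1 then 2 else 0 := by
          intro b; simp [hB1, bullet]
        rw [Finset.sum_congr rfl (fun b _ => heq b)]
        rw [Finset.sum_ite_eq' Finset.univ s.1 (fun _ => 2)]
        simp
      have h2 : (∑ t : (Σ v : V, Fin (G.loops v + ω v)), B1.E (Sum.inr s) (Sum.inr t)) = 0 := by
        apply Finset.sum_eq_zero; intro t _; simp [hB1, bullet]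
      rw [h1, h2]
    rw [Finset.sum_congr rfl (fun a _ => hA1 a), Finset.sum_congr rfl (fun s _ => hA2 s)]
    rw [Finset.sum_add_distrib]
    rw [Finset.sum_congr rfl (fun a _ => hinner2 a)]
    rw [← Finset.mul_sum]
    rw [Finset.sum_const, Finset.card_univ, Fintype.card_sigma]
    simp only [Fintype.card_fin, smul_eq_mul]
    ring
  have hcard : (Finset.univ : Finset (V ⊕ (Σ v : V, Fin (G.loops v + ω v)))).card
      = Fintype.card V + ∑ v, (G.loops v + ω v) := by
    rw [Finset.card_univ, Fintype.card_sum, Fintype.card_sigma]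
    simp
  rw [hsum, hcard] at hTB
  -- arithmetic
  have hdiv : 2 * ((∑ a, ∑ b, G.E a b) / 2) ≤ ∑ a, ∑ b, G.E a b := by
    omega
  unfold genus MultiGraph.edgeCount
  have hLsplit : (∑ v, (G.loops v + ω v)) = (∑ v, G.loops v) + ∑ v, ω v :=
    Finset.sum_add_distrib
  have hcastω : (∑ v, (ω v : ℤ)) = ((∑ v, ω v : ℕ) : ℤ) := by push_cast; rfl
  rw [hcastω]
  have hcast2 : ((((∑ v, ∑ w, G.E v w) / 2 + ∑ v, G.loops v : ℕ)) : ℤ)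
      = (((∑ v, ∑ w, G.E v w) / 2 : ℕ) : ℤ) + ((∑ v, G.loops v : ℕ) : ℤ) := by push_cast; rfl
  rw [hcast2]
  have hcardpos : 0 < Fintype.card V := Fintype.card_pos
  omega

end Bullet
section Side

variable [Fintype V1] [DecidableEq V1] [Fintype V2] [DecidableEq V2]

lemma side1 (G1 : MultiGraph V1) (G2 : MultiGraph V2) (hc1 : G1.Connected)
    (ω1 : V1 → ℕ) (ω2 : V2 → ℕ) (v1 : V1) (v2 : V2)
    (hhyp : Hyperelliptic (bridgeJoin G1 G2 v1 v2) (Sum.elim ω1 ω2)) :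
    Hyperelliptic G1 ω1 ∨ genus G1 ω1 ≤ 1 := by
  classical
  by_cases hgen : genus G1 ω1 ≤ 1
  · exact Or.inr hgen
  have hgen2 : 2 ≤ genus G1 ω1 := by omega
  left
  set GG := bridgeJoin G1 G2 v1 v2 with hGG
  set ωW := Sum.elim ω1 ω2 with hωW
  set B : MultiGraph ((V1 ⊕ V2) ⊕ (Σ w : V1 ⊕ V2, Fin (GG.loops w + ωW w))) :=
    bullet GG ωW with hB
  set B1 : MultiGraph (V1 ⊕ (Σ v : V1, Fin (G1.loops v + ω1 v))) := bullet G1 ω1 with hB1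
  have hNE : Nonempty (V1 ⊕ (Σ v : V1, Fin (G1.loops v + ω1 v))) := ⟨Sum.inl v1⟩
  have hNE1 : Nonempty V1 := ⟨v1⟩
  let ι : (V1 ⊕ (Σ v : V1, Fin (G1.loops v + ω1 v))) →
      ((V1 ⊕ V2) ⊕ (Σ w : V1 ⊕ V2, Fin (GG.loops w + ωW w))) := fun x =>
    match x with
    | .inl v => .inl (.inl v)
    | .inr s => .inr ⟨.inl s.1, s.2⟩
  let ρ : ((V1 ⊕ V2) ⊕ (Σ w : V1 ⊕ V2, Fin (GG.loops w + ωW w))) →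
      (V1 ⊕ (Σ v : V1, Fin (G1.loops v + ω1 v))) := fun x =>
    match x with
    | .inl (.inl a) => .inl a
    | .inl (.inr _) => .inl v1
    | .inr ⟨.inl a, i⟩ => .inr ⟨a, i⟩
    | .inr ⟨.inr _, _⟩ => .inl v1
  have C1 : ∀ x, ρ (ι x) = x := by
    rintro (v | ⟨v, i⟩) <;> rfl
  have C3 : ∀ x' y', B.E (ι x') (ι y') = B1.E x' y' := by
    rintro (a | ⟨a, i⟩) (b | ⟨b, j⟩) <;> simp [hB, hB1, ι, bullet, hGG, bridgeJoin]
  have C2 : ∀ x y, B.E x y ≠ 0 → ρ x ≠ ρ y →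
      (∃ x', x = ι x') ∧ (∃ y', y = ι y') := by
    rintro ((a | a) | ⟨(a | a), i⟩) ((b | b) | ⟨(b | b), j⟩) hE hρ
    · exact ⟨⟨.inl a, rfl⟩, ⟨.inl b, rfl⟩⟩
    · simp [hB, bullet, hGG, bridgeJoin] at hE
      obtain ⟨rfl, rfl⟩ := hE
      exact absurd rfl hρ
    · exact ⟨⟨.inl a, rfl⟩, ⟨.inr ⟨b, j⟩, rfl⟩⟩
    · simp [hB, bullet] at hE
    · simp [hB, bullet, hGG, bridgeJoin] at hE
      obtain ⟨rfl, rfl⟩ := hE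
      exact absurd rfl hρ
    · exact absurd rfl hρ
    · simp [hB, bullet] at hE
    · exact absurd rfl hρ
    · exact ⟨⟨.inr ⟨a, i⟩, rfl⟩, ⟨.inl b, rfl⟩⟩
    · simp [hB, bullet] at hE
    · simp [hB, bullet] at hE
    · simp [hB, bullet] at hE
    · simp [hB, bullet] at hE
    · exact absurd rfl hρ
    · simp [hB, bullet] at hE
    · simp [hB, bullet] at hE
  obtain ⟨hg, d, hdeg, hrank⟩ := hhyp
  rcases abstract_side B B1 ι ρ C1 C2 C3 d hdeg hrank with ⟨d1, h1, h2⟩ | hall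
  · exact ⟨hgen2, d1, h1, h2⟩
  · exfalso
    have := genus_le_of_all_principal G1 ω1 hc1 hall
    omega


lemma side2 (G1 : MultiGraph V1) (G2 : MultiGraph V2) (hc2 : G2.Connected)
    (ω1 : V1 → ℕ) (ω2 : V2 → ℕ) (v1 : V1) (v2 : V2)
    (hhyp : Hyperelliptic (bridgeJoin G1 G2 v1 v2) (Sum.elim ω1 ω2)) :
    Hyperelliptic G2 ω2 ∨ genus G2 ω2 ≤ 1 := by
  classical
  by_cases hgen : genus G2 ω2 ≤ 1
  · exact Or.inr hgen
  have hgen2 : 2 ≤ genus G2 ω2 := by omega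
  left
  set GG := bridgeJoin G1 G2 v1 v2 with hGG
  set ωW := Sum.elim ω1 ω2 with hωW
  set B : MultiGraph ((V1 ⊕ V2) ⊕ (Σ w : V1 ⊕ V2, Fin (GG.loops w + ωW w))) :=
    bullet GG ωW with hB
  set B2 : MultiGraph (V2 ⊕ (Σ v : V2, Fin (G2.loops v + ω2 v))) := bullet G2 ω2 with hB2
  have hNE : Nonempty (V2 ⊕ (Σ v : V2, Fin (G2.loops v + ω2 v))) := ⟨Sum.inl v2⟩
  have hNE1 : Nonempty V2 := ⟨v2⟩
  let ι : (V2 ⊕ (Σ v : V2, Fin (G2.loops v + ω2 v))) →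
      ((V1 ⊕ V2) ⊕ (Σ w : V1 ⊕ V2, Fin (GG.loops w + ωW w))) := fun x =>
    match x with
    | .inl v => .inl (.inr v)
    | .inr s => .inr ⟨.inr s.1, s.2⟩
  let ρ : ((V1 ⊕ V2) ⊕ (Σ w : V1 ⊕ V2, Fin (GG.loops w + ωW w))) →
      (V2 ⊕ (Σ v : V2, Fin (G2.loops v + ω2 v))) := fun x =>
    match x with
    | .inl (.inr b) => .inl b
    | .inl (.inl _) => .inl v2
    | .inr ⟨.inr b, i⟩ => .inr ⟨b, i⟩
    | .inr ⟨.inl _, _⟩ => .inl v2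
  have C1 : ∀ x, ρ (ι x) = x := by
    rintro (v | ⟨v, i⟩) <;> rfl
  have C3 : ∀ x' y', B.E (ι x') (ι y') = B2.E x' y' := by
    rintro (a | ⟨a, i⟩) (b | ⟨b, j⟩) <;> simp [hB, hB2, ι, bullet, hGG, bridgeJoin]
  have C2 : ∀ x y, B.E x y ≠ 0 → ρ x ≠ ρ y →
      (∃ x', x = ι x') ∧ (∃ y', y = ι y') := by
    rintro ((a | a) | ⟨(a | a), i⟩) ((b | b) | ⟨(b | b), j⟩) hE hρ
    · exact absurd rfl hρ
    · simp [hB, bullet, hGG, bridgeJoin] at hE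
      obtain ⟨rfl, rfl⟩ := hE
      exact absurd rfl hρ
    · exact absurd rfl hρ
    · simp [hB, bullet] at hE
    · simp [hB, bullet, hGG, bridgeJoin] at hE
      obtain ⟨rfl, rfl⟩ := hE
      exact absurd rfl hρ
    · exact ⟨⟨.inl a, rfl⟩, ⟨.inl b, rfl⟩⟩
    · simp [hB, bullet] at hE
    · exact ⟨⟨.inl a, rfl⟩, ⟨.inr ⟨b, j⟩, rfl⟩⟩
    · exact absurd rfl hρ
    · simp [hB, bullet] at hE
    · simp [hB, bullet] at hE
    · simp [hB, bullet] at hE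
    · simp [hB, bullet] at hE
    · exact ⟨⟨.inr ⟨a, i⟩, rfl⟩, ⟨.inl b, rfl⟩⟩
    · simp [hB, bullet] at hE
    · simp [hB, bullet] at hE
  obtain ⟨hg, d, hdeg, hrank⟩ := hhyp
  rcases abstract_side B B2 ι ρ C1 C2 C3 d hdeg hrank with ⟨d1, h1, h2⟩ | hall
  · exact ⟨hgen2, d1, h1, h2⟩
  · exfalso
    have := genus_le_of_all_principal G2 ω2 hc2 hall
    omega

end Side
/-- components of a hyperelliptic graph across a bridge are
hyperelliptic or of genus at most 1. -/
theorem statement_14 {V1 V2 : Type} [Fintype V1] [DecidableEq V1] [Fintype V2] [DecidableEq V2]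
    (G1 : MultiGraph V1) (G2 : MultiGraph V2)
    (hc1 : G1.Connected) (hc2 : G2.Connected)
    (ω1 : V1 → ℕ) (ω2 : V2 → ℕ) (v1 : V1) (v2 : V2)
    (hg : 2 ≤ genus (bridgeJoin G1 G2 v1 v2) (Sum.elim ω1 ω2))
    (hhyp : Hyperelliptic (bridgeJoin G1 G2 v1 v2) (Sum.elim ω1 ω2)) :
    (Hyperelliptic G1 ω1 ∨ genus G1 ω1 ≤ 1) ∧
    (Hyperelliptic G2 ω2 ∨ genus G2 ω2 ≤ 1) := by
  exact ⟨side1 G1 G2 hc1 ω1 ω2 v1 v2 hhyp, side2 G1 G2 hc2 ω1 ω2 v1 v2 hhyp⟩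

end BN
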